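/- Let α be an alphabet with involution τ and let Π be the group generated by {z_a}_{a∈α} with relations z_a z_{τ(a)} = 1. Suppose a, b ∈ α lie in different orbits of τ, and similarly a', b' ∈ α lie in different orbits of τ. If z_a z_b z_a^{-1} z_b^{-1} = z_{a'} z_{b'} z_{a'}^{-1} z_{b'}^{-1} in Π, then a = a' and b = b'. -/

import Mathlib

/-- The group `Π` with generators `{z_a}_{a ∈ α}` and relations `z_a z_{τ a} = 1`. -/
abbrev PiGrp {α : Type} (τ : α → α) : Type :=
  PresentedGroup {x : FreeGroup α | ∃ a : α, x = FreeGroup.of a * FreeGroup.of (τ a)}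

/-- The generator `z_a` of `Π`. -/
def zgen {α : Type} (τ : α → α) (a : α) : PiGrp τ := PresentedGroup.of a

/-- Reduced words: lists in which no letter is followed by its image under τ. -/
abbrev Red {α : Type} (τ : α → α) : Type :=
  {l : List α // l.IsChain (fun x y => y ≠ τ x)}

open Classical in
/-- Left multiplication by the generator `a` on reduced words. -/
noncomputable def mulGen {α : Type} (τ : α → α) (a : α) : Red τ → Red τ
  | ⟨[], _⟩ => ⟨[a], List.isChain_singleton a⟩
  | ⟨x :: t, h⟩ =>
    if hx : x = τ a then ⟨t, (List.isChain_cons.1 h).2⟩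
    else ⟨a :: x :: t, List.isChain_cons_cons.2 ⟨hx, h⟩⟩

theorem mulGen_inv {α : Type} {τ : α → α} (hτ : Function.Involutive τ) (a : α)
    (l : Red τ) : mulGen τ (τ a) (mulGen τ a l) = l := by
  classical
  obtain ⟨l, hl⟩ := l
  match l, hl with
  | [], hl =>
      simp only [mulGen]
      rw [dif_pos (by rw [hτ a])]
  | x :: t, hl =>
      by_cases hx : x = τ a
      · simp only [mulGen, dif_pos hx]
        match t, hl.tail with
        | [], _ => simp only [mulGen, hx]
        | y :: s, ht =>
            have hy : y ≠ τ (τ a) := by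
              have := (List.isChain_cons_cons.1 hl).1
              rwa [hx] at this
            simp only [mulGen, dif_neg hy, hx]
      · simp only [mulGen, dif_neg hx]
        rw [dif_pos (hτ a).symm]

/-- The permutation of reduced words induced by the generator `a`. -/
noncomputable def permGen {α : Type} {τ : α → α} (hτ : Function.Involutive τ) (a : α) :
    Equiv.Perm (Red τ) where
  toFun := mulGen τ a
  invFun := mulGen τ (τ a)
  left_inv := mulGen_inv hτ a
  right_inv := fun l => by
    have := mulGen_inv hτ (τ a) l
    rwa [hτ a] at this

/-- The action of `Π` on reduced words. -/
noncomputable def piAct {α : Type} {τ : α → α} (hτ : Function.Involutive τ) :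
    PiGrp τ →* Equiv.Perm (Red τ) :=
  PresentedGroup.toGroup (f := fun a => permGen hτ a) (by
    rintro r ⟨c, rfl⟩
    simp only [map_mul, FreeGroup.lift_apply_of]
    ext1 l
    show permGen hτ c (permGen hτ (τ c) l) = l
    show mulGen τ c (mulGen τ (τ c) l) = l
    have := mulGen_inv hτ (τ c) l
    rwa [hτ c] at this)

theorem piAct_zgen {α : Type} {τ : α → α} (hτ : Function.Involutive τ) (a : α) :
    piAct hτ (zgen τ a) = permGen hτ a :=
  PresentedGroup.toGroup.of _

theorem commutator_word {α : Type} {τ : α → α} (hτ : Function.Involutive τ)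
    (a b : α) (hab : b ≠ a ∧ b ≠ τ a) :
    (piAct hτ (zgen τ a * zgen τ b * (zgen τ a)⁻¹ * (zgen τ b)⁻¹)
      (⟨[], List.isChain_nil⟩ : Red τ)).1 = [a, b, τ a, τ b] := by
  classical
  rw [map_mul, map_mul, map_mul, map_inv, map_inv, piAct_zgen, piAct_zgen]
  have hstep : ∀ (c : α) (l : Red τ), (permGen hτ c)⁻¹ l = mulGen τ (τ c) l := fun c l => rfl
  simp only [Equiv.Perm.mul_apply, hstep]
  show (mulGen τ a (mulGen τ b (mulGen τ (τ a) (mulGen τ (τ b) (⟨[], List.isChain_nil⟩ : Red τ))))).1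
      = [a, b, τ a, τ b]
  have h1 : mulGen τ (τ b) (⟨[], List.isChain_nil⟩ : Red τ) = ⟨[τ b], List.isChain_singleton _⟩ := rfl
  rw [h1]
  have hc1 : τ b ≠ τ (τ a) := fun hh => hab.2 (hτ.injective hh)
  have hc2 : τ a ≠ τ b := fun hh => hab.1 (hτ.injective hh).symm
  have hc3 : b ≠ τ a := hab.2
  simp only [mulGen, dif_neg hc1, dif_neg hc2, dif_neg hc3]

theorem commutator_eq_iff {α : Type} (τ : α → α) (hτ : Function.Involutive τ)
    (a b a' b' : α)
    (hab : b ≠ a ∧ b ≠ τ a) (hab' : b' ≠ a' ∧ b' ≠ τ a')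
    (h : zgen τ a * zgen τ b * (zgen τ a)⁻¹ * (zgen τ b)⁻¹
        = zgen τ a' * zgen τ b' * (zgen τ a')⁻¹ * (zgen τ b')⁻¹) :
    a = a' ∧ b = b' := by
  have h1 := commutator_word hτ a b hab
  have h2 := commutator_word hτ a' b' hab'
  rw [h] at h1
  rw [h2] at h1
  injection h1.symm with e1 rest
  injection rest with e2 _
  exact ⟨e1, e2⟩
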